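/- Let g(y) = √(y tanh(y)) for y > 0. Then g'(y) > 0 and g''(y) < 0 for all y > 0; moreover g'(y) - 1 ~ -y²/2 as y → 0⁺, g'(y) ~ (1/2)y^{-1/2} as y → +∞, g''(y) ~ -y as y → 0⁺, and g''(y) ~ -(1/4)y^{-3/2} as y → +∞. -/

import Mathlib

open Filter
open scoped Topology

open Real in
lemma ww_tanh_hasDeriv (x : ℝ) : HasDerivAt Real.tanh (1 - Real.tanh x ^ 2) x := by
  have h := (Real.hasDerivAt_sinh x).div (Real.hasDerivAt_cosh x) (Real.cosh_pos x).ne'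
  have he : Real.tanh = fun x => Real.sinh x / Real.cosh x :=
    funext fun x => Real.tanh_eq_sinh_div_cosh x
  rw [he]
  refine h.congr_deriv ?_
  have h1 : Real.cosh x ^ 2 - Real.sinh x ^ 2 = 1 := Real.cosh_sq_sub_sinh_sq x
  have h2 : Real.cosh x ≠ 0 := (Real.cosh_pos x).ne'
  field_simp

lemma ww_tanh_pos {y : ℝ} (hy : 0 < y) : 0 < Real.tanh y := by
  rw [Real.tanh_eq_sinh_div_cosh]
  exact div_pos (Real.sinh_pos_iff.mpr hy) (Real.cosh_pos y)

lemma ww_tanh_nonneg {y : ℝ} (hy : 0 ≤ y) : 0 ≤ Real.tanh y := by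
  rw [Real.tanh_eq_sinh_div_cosh]
  exact div_nonneg (Real.sinh_nonneg_iff.mpr hy) (Real.cosh_pos y).le

lemma ww_cosh_sub_sinh (y : ℝ) : Real.cosh y - Real.sinh y = Real.exp (-y) := by
  rw [Real.cosh_eq, Real.sinh_eq]; ring

lemma ww_tanh_lt_one (y : ℝ) : Real.tanh y < 1 := by
  rw [Real.tanh_eq_sinh_div_cosh, div_lt_one (Real.cosh_pos y)]
  have := ww_cosh_sub_sinh y
  have := Real.exp_pos (-y)
  linarith

lemma ww_neg_one_lt_tanh (y : ℝ) : -1 < Real.tanh y := by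
  rw [Real.tanh_eq_sinh_div_cosh, lt_div_iff₀ (Real.cosh_pos y)]
  have h : Real.cosh y + Real.sinh y = Real.exp y := by rw [Real.cosh_eq, Real.sinh_eq]; ring
  have := Real.exp_pos y
  nlinarith

lemma ww_tanh_sq_lt_one (y : ℝ) : Real.tanh y ^ 2 < 1 := by
  nlinarith [ww_tanh_lt_one y, ww_neg_one_lt_tanh y]

lemma ww_mono1 : Monotone (fun z : ℝ => z - Real.tanh z) := by
  apply monotone_of_hasDerivAt_nonneg (f' := fun z => Real.tanh z ^ 2)
  · intro z
    have h := (hasDerivAt_id z).sub (ww_tanh_hasDeriv z)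
    refine h.congr_deriv ?_; ring
  · intro z; exact sq_nonneg _

lemma ww_tanh_le_id {x : ℝ} (hx : 0 ≤ x) : Real.tanh x ≤ x := by
  have := ww_mono1 hx
  simp only [Real.tanh_zero, sub_zero] at this
  linarith

lemma ww_tanh_sq_le_sq (x : ℝ) : Real.tanh x ^ 2 ≤ x ^ 2 := by
  rcases le_total 0 x with hx | hx
  · have h1 := ww_tanh_le_id hx
    have h2 := ww_tanh_nonneg hx
    nlinarith
  · have := ww_mono1 hx
    simp only [Real.tanh_zero, sub_zero] at this
    have h2 : Real.tanh x ≤ 0 := by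
      rw [Real.tanh_eq_sinh_div_cosh]
      exact div_nonpos_of_nonpos_of_nonneg (Real.sinh_nonpos_iff.mpr hx) (Real.cosh_pos x).le
    nlinarith

lemma ww_mono2 : Monotone (fun z : ℝ => Real.tanh z - z + z ^ 3 / 3) := by
  apply monotone_of_hasDerivAt_nonneg (f' := fun z => z ^ 2 - Real.tanh z ^ 2)
  · intro z
    have h := ((ww_tanh_hasDeriv z).sub (hasDerivAt_id z)).add ((hasDerivAt_pow 3 z).div_const 3)
    refine h.congr_deriv ?_; push_cast; ring
  · intro z; exact sub_nonneg.mpr (ww_tanh_sq_le_sq z)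

lemma ww_cube_le_tanh {x : ℝ} (hx : 0 ≤ x) : x - x ^ 3 / 3 ≤ Real.tanh x := by
  have := ww_mono2 hx
  simp only [Real.tanh_zero] at this
  nlinarith

lemma ww_one_sub_tanh_sq (x : ℝ) : 1 - Real.tanh x ^ 2 = 1 / Real.cosh x ^ 2 := by
  rw [Real.tanh_eq_sinh_div_cosh]
  have h2 : Real.cosh x ≠ 0 := (Real.cosh_pos x).ne'
  field_simp
  exact Real.cosh_sq_sub_sinh_sq x

lemma ww_inv_cosh_le (x : ℝ) : 1 / Real.cosh x ≤ 2 * Real.exp (-x) := by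
  rw [div_le_iff₀ (Real.cosh_pos x), Real.cosh_eq]
  have h : Real.exp (-x) * Real.exp x = 1 := by rw [← Real.exp_add]; simp
  nlinarith [Real.exp_pos (-x), Real.exp_pos x, sq_nonneg (Real.exp (-x))]

/-- tanh y / y → 1 as y → 0⁺ -/

lemma ww_U_lim : Tendsto (fun y : ℝ => Real.tanh y / y) (𝓝[>] 0) (𝓝 1) := by
  have h : HasDerivAt Real.tanh 1 0 := by simpa using ww_tanh_hasDeriv 0
  have h1 := hasDerivAt_iff_tendsto_slope.mp h
  have h2 : Tendsto (slope Real.tanh 0) (𝓝[>] 0) (𝓝 1) :=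
    h1.mono_left (nhdsWithin_mono 0 fun y hy => Set.mem_compl_singleton_iff.mpr (ne_of_gt hy))
  exact h2.congr fun y => by simp [slope_def_field]

/-- (tanh y - y)/y² → 0 as y → 0⁺ -/

lemma ww_B_lim : Tendsto (fun y : ℝ => (Real.tanh y - y) / y ^ 2) (𝓝[>] 0) (𝓝 0) := by
  apply tendsto_of_tendsto_of_tendsto_of_le_of_le' (g := fun y : ℝ => -(y / 3))
    (h := fun _ : ℝ => (0 : ℝ))
  · have : Tendsto (fun y : ℝ => -(y / 3)) (𝓝 0) (𝓝 (-(0 / 3))) :=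
      ((continuous_id.div_const 3).neg.tendsto 0)
    simpa using this.mono_left nhdsWithin_le_nhds
  · exact tendsto_const_nhds
  · filter_upwards [self_mem_nhdsWithin] with y hy
    have hy0 : (0:ℝ) < y := hy
    rw [le_div_iff₀ (by positivity : (0:ℝ) < y ^ 2)]
    have := ww_cube_le_tanh hy0.le
    nlinarith
  · filter_upwards [self_mem_nhdsWithin] with y hy
    have hy0 : (0:ℝ) < y := hy
    apply div_nonpos_of_nonpos_of_nonneg _ (sq_nonneg y)
    linarith [ww_tanh_le_id hy0.le]

/-- tanh → 1 at +∞ -/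

lemma ww_tanh_atTop : Tendsto Real.tanh atTop (𝓝 1) := by
  apply tendsto_of_tendsto_of_tendsto_of_le_of_le'
    (g := fun y : ℝ => 1 - 2 * Real.exp (-(2 * y))) (h := fun _ : ℝ => (1 : ℝ))
  · have h2 : Tendsto (fun y : ℝ => 2 * y) atTop atTop :=
      Tendsto.const_mul_atTop two_pos tendsto_id
    have := (Real.tendsto_exp_neg_atTop_nhds_zero.comp h2).const_mul 2
    simpa using tendsto_const_nhds.sub this
  · exact tendsto_const_nhds
  · filter_upwards [eventually_ge_atTop (0:ℝ)] with y hy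
    have h1 : 1 - Real.tanh y = Real.exp (-y) * (1 / Real.cosh y) := by
      rw [Real.tanh_eq_sinh_div_cosh]
      have hc := (Real.cosh_pos y).ne'
      field_simp
      exact ww_cosh_sub_sinh y
    have h2 : Real.exp (-y) * (1 / Real.cosh y) ≤ Real.exp (-y) * (2 * Real.exp (-y)) :=
      mul_le_mul_of_nonneg_left (ww_inv_cosh_le y) (Real.exp_pos _).le
    have h3 : Real.exp (-y) * (2 * Real.exp (-y)) = 2 * Real.exp (-(2 * y)) := by
      rw [show -(2*y) = -y + -y by ring, Real.exp_add]; ring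
    linarith [h1, h2, h3.symm.le]
  · exact Eventually.of_forall fun y => (ww_tanh_lt_one y).le

/-- y²(1 - tanh² y) → 0 at +∞ -/

lemma ww_ysq_s_lim : Tendsto (fun y : ℝ => y ^ 2 * (1 - Real.tanh y ^ 2)) atTop (𝓝 0) := by
  apply tendsto_of_tendsto_of_tendsto_of_le_of_le' (g := fun _ : ℝ => (0 : ℝ))
    (h := fun y : ℝ => 4 * (y * Real.exp (-y)) ^ 2)
  · exact tendsto_const_nhds
  · have h := Real.tendsto_pow_mul_exp_neg_atTop_nhds_zero 1
    have h2 := (h.pow 2).const_mul 4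
    simpa using h2
  · filter_upwards with y
    have := ww_tanh_sq_lt_one y
    nlinarith [sq_nonneg y]
  · filter_upwards [eventually_ge_atTop (0:ℝ)] with y hy
    rw [ww_one_sub_tanh_sq]
    have h1 : y * (1 / Real.cosh y) ≤ y * (2 * Real.exp (-y)) :=
      mul_le_mul_of_nonneg_left (ww_inv_cosh_le y) hy
    have h2 : 0 ≤ y * (1 / Real.cosh y) := by positivity
    have h3 : y ^ 2 * (1 / Real.cosh y ^ 2) = (y * (1 / Real.cosh y)) ^ 2 := by ring
    rw [h3]
    nlinarith

lemma ww_ys_lim : Tendsto (fun y : ℝ => y * (1 - Real.tanh y ^ 2)) atTop (𝓝 0) := by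
  apply tendsto_of_tendsto_of_tendsto_of_le_of_le' (g := fun _ : ℝ => (0 : ℝ))
    (h := fun y : ℝ => y ^ 2 * (1 - Real.tanh y ^ 2))
  · exact tendsto_const_nhds
  · exact ww_ysq_s_lim
  · filter_upwards [eventually_ge_atTop (0:ℝ)] with y hy
    nlinarith [ww_tanh_sq_lt_one y]
  · filter_upwards [eventually_ge_atTop (1:ℝ)] with y hy
    have h1 : 0 ≤ 1 - Real.tanh y ^ 2 := by nlinarith [ww_tanh_sq_lt_one y]
    have h2 : y ≤ y ^ 2 := by nlinarith
    nlinarith [mul_le_mul_of_nonneg_right h2 h1]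

noncomputable def phiW (y : ℝ) : ℝ :=
  (Real.tanh y + y * (1 - Real.tanh y ^ 2)) / (2 * Real.sqrt (y * Real.tanh y))

lemma phiW_def (y : ℝ) : phiW y =
    (Real.tanh y + y * (1 - Real.tanh y ^ 2)) / (2 * Real.sqrt (y * Real.tanh y)) := rfl

noncomputable def psiW (y : ℝ) : ℝ :=
  (2 * (2 * (1 - Real.tanh y ^ 2) * (1 - y * Real.tanh y)) * (y * Real.tanh y)
      - (Real.tanh y + y * (1 - Real.tanh y ^ 2)) ^ 2)
    / (4 * (y * Real.tanh y) * Real.sqrt (y * Real.tanh y))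

lemma psiW_def (y : ℝ) : psiW y =
    (2 * (2 * (1 - Real.tanh y ^ 2) * (1 - y * Real.tanh y)) * (y * Real.tanh y)
      - (Real.tanh y + y * (1 - Real.tanh y ^ 2)) ^ 2)
    / (4 * (y * Real.tanh y) * Real.sqrt (y * Real.tanh y)) := rfl

lemma ww_f_pos {y : ℝ} (hy : 0 < y) : 0 < y * Real.tanh y := mul_pos hy (ww_tanh_pos hy)

lemma ww_hasDeriv_f {y : ℝ} :
    HasDerivAt (fun x => x * Real.tanh x) (Real.tanh y + y * (1 - Real.tanh y ^ 2)) y := by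
  have h := (hasDerivAt_id y).mul (ww_tanh_hasDeriv y)
  refine h.congr_deriv ?_; simp only [id_eq]; ring

lemma ww_hasDeriv_g {y : ℝ} (hy : 0 < y) :
    HasDerivAt (fun x => Real.sqrt (x * Real.tanh x)) (phiW y) y :=
  ww_hasDeriv_f.sqrt (ww_f_pos hy).ne'

lemma ww_deriv_g_eq {y : ℝ} (hy : 0 < y) :
    deriv (fun x => Real.sqrt (x * Real.tanh x)) y = phiW y := (ww_hasDeriv_g hy).deriv

lemma ww_hasDeriv_phi {y : ℝ} (hy : 0 < y) : HasDerivAt phiW (psiW y) y := by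
  have hfpos := ww_f_pos hy
  have hSpos : 0 < Real.sqrt (y * Real.tanh y) := Real.sqrt_pos.mpr hfpos
  have hS0 : Real.sqrt (y * Real.tanh y) ≠ 0 := hSpos.ne'
  have hN : HasDerivAt (fun x => Real.tanh x + x * (1 - Real.tanh x ^ 2))
      (2 * (1 - Real.tanh y ^ 2) * (1 - y * Real.tanh y)) y := by
    have h1 : HasDerivAt (fun x => 1 - Real.tanh x ^ 2)
        (-((2:ℕ) * Real.tanh y ^ 1 * (1 - Real.tanh y ^ 2))) y :=
      ((ww_tanh_hasDeriv y).pow 2).const_sub 1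
    have h2 := (hasDerivAt_id y).mul h1
    have h3 := (ww_tanh_hasDeriv y).add h2
    refine h3.congr_deriv ?_; simp only [id_eq]; push_cast; ring
  have hD : HasDerivAt (fun x => 2 * Real.sqrt (x * Real.tanh x))
      ((Real.tanh y + y * (1 - Real.tanh y ^ 2)) / Real.sqrt (y * Real.tanh y)) y := by
    have h := (ww_hasDeriv_g hy).const_mul 2
    refine h.congr_deriv ?_
    rw [phiW_def]
    field_simp
  have hdiv := hN.div hD (by positivity : (2:ℝ) * Real.sqrt (y * Real.tanh y) ≠ 0)
  have heq : phiW = fun x =>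
      (Real.tanh x + x * (1 - Real.tanh x ^ 2)) / (2 * Real.sqrt (x * Real.tanh x)) := rfl
  rw [heq]
  refine hdiv.congr_deriv ?_
  rw [psiW_def]
  have hss : Real.sqrt (y * Real.tanh y) * Real.sqrt (y * Real.tanh y) = y * Real.tanh y :=
    Real.mul_self_sqrt hfpos.le
  set S := Real.sqrt (y * Real.tanh y) with hSdef
  rw [show y * Real.tanh y = S * S from hss.symm]
  field_simp
  ring

lemma ww_phi_pos {y : ℝ} (hy : 0 < y) : 0 < phiW y := by
  rw [phiW_def]
  have ht := ww_tanh_pos hy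
  have hs := ww_tanh_sq_lt_one y
  have hS : 0 < Real.sqrt (y * Real.tanh y) := Real.sqrt_pos.mpr (ww_f_pos hy)
  apply div_pos _ (by positivity)
  nlinarith

lemma ww_psi_neg {y : ℝ} (hy : 0 < y) : psiW y < 0 := by
  rw [psiW_def]
  have ht := ww_tanh_pos hy
  have hs := ww_tanh_sq_lt_one y
  have hS : 0 < Real.sqrt (y * Real.tanh y) := Real.sqrt_pos.mpr (ww_f_pos hy)
  apply div_neg_of_neg_of_pos _ (by positivity)
  have h4 : 0 < y ^ 2 * Real.tanh y ^ 2 * (1 - Real.tanh y ^ 2) := by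
    have : 0 < 1 - Real.tanh y ^ 2 := by linarith
    positivity
  nlinarith [sq_nonneg (Real.tanh y - y * (1 - Real.tanh y ^ 2)), h4]

lemma ww_deriv2_eq {y : ℝ} (hy : 0 < y) :
    iteratedDeriv 2 (fun x => Real.sqrt (x * Real.tanh x)) y = psiW y := by
  rw [show (2:ℕ) = 1 + 1 from rfl, iteratedDeriv_succ, iteratedDeriv_one]
  have hev : deriv (fun x => Real.sqrt (x * Real.tanh x)) =ᶠ[𝓝 y] phiW :=
    Filter.eventually_of_mem (isOpen_Ioi.mem_nhds hy) fun z hz => ww_deriv_g_eq hz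
  rw [hev.deriv_eq]
  exact (ww_hasDeriv_phi hy).deriv

lemma ww_sqrtU_lim : Tendsto (fun y : ℝ => Real.sqrt (Real.tanh y / y)) (𝓝[>] 0) (𝓝 1) := by
  have := ww_U_lim.sqrt
  simpa using this

lemma ww_phi_lim_zero :
    Tendsto (fun y : ℝ => (phiW y - 1) / (-(y ^ 2) / 2)) (𝓝[>] 0) (𝓝 1) := by
  set E : ℝ → ℝ := fun y =>
    (Real.tanh y / y) * Real.sqrt (Real.tanh y / y) -
      ((Real.tanh y - y) / y ^ 2) ^ 2 /
        ((Real.sqrt (Real.tanh y / y) + 1) ^ 2 * Real.sqrt (Real.tanh y / y)) with hE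
  have hEt : Tendsto E (𝓝[>] 0) (𝓝 1) := by
    rw [hE]
    have hden : Tendsto (fun y : ℝ =>
        (Real.sqrt (Real.tanh y / y) + 1) ^ 2 * Real.sqrt (Real.tanh y / y)) (𝓝[>] 0)
        (𝓝 (((1:ℝ) + 1) ^ 2 * 1)) :=
      ((ww_sqrtU_lim.add tendsto_const_nhds).pow 2).mul ww_sqrtU_lim
    have h := (ww_U_lim.mul ww_sqrtU_lim).sub ((ww_B_lim.pow 2).div hden (by norm_num))
    norm_num at h
    exact h
  have hcong : ∀ y ∈ Set.Ioi (0:ℝ), (phiW y - 1) / (-(y ^ 2) / 2) = E y := by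
    intro y hy
    have hy0 : (0:ℝ) < y := hy
    have ht : 0 < Real.tanh y := ww_tanh_pos hy0
    rw [hE]
    simp only
    set t := Real.tanh y with hT
    set a := Real.sqrt (t / y) with hA
    have ha : 0 < a := Real.sqrt_pos.mpr (by positivity)
    have ha2 : a ^ 2 = t / y := Real.sq_sqrt (by positivity)
    have hty : t = y * a ^ 2 := by field_simp [hy0.ne'] at ha2 ⊢; linarith [ha2]
    have hsq : Real.sqrt (y * t) = y * a := by
      rw [show y * t = y ^ 2 * (t / y) by field_simp, Real.sqrt_mul (sq_nonneg y),
        Real.sqrt_sq hy0.le]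
    rw [phiW_def, ← hT, hsq, hty]
    have h1 : a + 1 ≠ 0 := by positivity
    field_simp
    ring
  exact (tendsto_congr' (Filter.eventually_of_mem self_mem_nhdsWithin hcong)).mpr hEt

lemma ww_rpow_neg_half {y : ℝ} (hy : 0 < y) : y ^ (-(1:ℝ) / 2) = (Real.sqrt y)⁻¹ := by
  rw [show (-(1:ℝ) / 2) = -(1 / 2) by norm_num, Real.rpow_neg hy.le, ← Real.sqrt_eq_rpow]

lemma ww_rpow_neg_threehalf {y : ℝ} (hy : 0 < y) :
    y ^ (-(3:ℝ) / 2) = (y * Real.sqrt y)⁻¹ := by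
  rw [show (-(3:ℝ) / 2) = -(3 / 2) by norm_num, Real.rpow_neg hy.le]
  congr 1
  rw [show ((3:ℝ) / 2) = 1 + 1 / 2 by norm_num, Real.rpow_add hy, Real.rpow_one,
    ← Real.sqrt_eq_rpow]

lemma ww_phi_lim_top :
    Tendsto (fun y : ℝ => phiW y / ((1 / 2) * y ^ (-(1:ℝ) / 2))) atTop (𝓝 1) := by
  have hEt : Tendsto (fun y : ℝ =>
      (Real.tanh y + y * (1 - Real.tanh y ^ 2)) / Real.sqrt (Real.tanh y)) atTop (𝓝 1) := by
    have hden : Tendsto (fun y : ℝ => Real.sqrt (Real.tanh y)) atTop (𝓝 1) := by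
      simpa using ww_tanh_atTop.sqrt
    have h := (ww_tanh_atTop.add ww_ys_lim).div hden (by norm_num)
    norm_num at h
    exact h
  apply (tendsto_congr' _).mpr hEt
  filter_upwards [eventually_gt_atTop (0:ℝ)] with y hy
  have ht : 0 < Real.tanh y := ww_tanh_pos hy
  have hsy : 0 < Real.sqrt y := Real.sqrt_pos.mpr hy
  have hst : 0 < Real.sqrt (Real.tanh y) := Real.sqrt_pos.mpr ht
  rw [phiW_def, ww_rpow_neg_half hy, Real.sqrt_mul hy.le]
  field_simp

lemma ww_psi_lim_zero :
    Tendsto (fun y : ℝ => psiW y / (-y)) (𝓝[>] 0) (𝓝 1) := by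
  set E : ℝ → ℝ := fun y =>
    (((Real.tanh y - y) / y ^ 2 + y * (Real.tanh y / y) ^ 2) / 2) ^ 2 /
        ((Real.tanh y / y) * Real.sqrt (Real.tanh y / y)) +
      Real.sqrt (Real.tanh y / y) * (1 - y ^ 2 * (Real.tanh y / y) ^ 2) with hE
  have hid : Tendsto (fun y : ℝ => y) (𝓝[>] 0) (𝓝 0) :=
    (continuous_id.tendsto 0).mono_left nhdsWithin_le_nhds
  have hEt : Tendsto E (𝓝[>] 0) (𝓝 1) := by
    rw [hE]
    have hden : Tendsto (fun y : ℝ => (Real.tanh y / y) * Real.sqrt (Real.tanh y / y))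
        (𝓝[>] 0) (𝓝 ((1:ℝ) * 1)) := ww_U_lim.mul ww_sqrtU_lim
    have h := ((((ww_B_lim.add (hid.mul (ww_U_lim.pow 2))).div_const 2).pow 2).div hden
        (by norm_num)).add
      (ww_sqrtU_lim.mul ((tendsto_const_nhds : Tendsto (fun _ : ℝ => (1:ℝ)) (𝓝[>] 0) (𝓝 1)).sub ((hid.pow 2).mul (ww_U_lim.pow 2))))
    norm_num at h
    exact h
  apply (tendsto_congr' _).mpr hEt
  filter_upwards [self_mem_nhdsWithin] with y hy
  have hy0 : (0:ℝ) < y := hy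
  have ht : 0 < Real.tanh y := ww_tanh_pos hy0
  rw [hE]
  simp only
  set t := Real.tanh y with hT
  set a := Real.sqrt (t / y) with hA
  have ha : 0 < a := Real.sqrt_pos.mpr (by positivity)
  have ha2 : a ^ 2 = t / y := Real.sq_sqrt (by positivity)
  have hty : t = y * a ^ 2 := by field_simp [hy0.ne'] at ha2 ⊢; linarith [ha2]
  have hsq : Real.sqrt (y * t) = y * a := by
    rw [show y * t = y ^ 2 * (t / y) by field_simp, Real.sqrt_mul (sq_nonneg y),
      Real.sqrt_sq hy0.le]
  rw [psiW_def, ← hT, hsq, hty]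
  field_simp
  ring

lemma ww_psi_lim_top :
    Tendsto (fun y : ℝ => psiW y / (-(1 / 4) * y ^ (-(3:ℝ) / 2))) atTop (𝓝 1) := by
  have hEt : Tendsto (fun y : ℝ =>
      ((Real.tanh y - y * (1 - Real.tanh y ^ 2)) ^ 2 +
        4 * (y ^ 2 * (1 - Real.tanh y ^ 2)) * Real.tanh y ^ 2) /
      (Real.tanh y * Real.sqrt (Real.tanh y))) atTop (𝓝 1) := by
    have hden : Tendsto (fun y : ℝ => Real.tanh y * Real.sqrt (Real.tanh y)) atTop
        (𝓝 ((1:ℝ) * 1)) := by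
      have : Tendsto (fun y : ℝ => Real.sqrt (Real.tanh y)) atTop (𝓝 1) := by
        simpa using ww_tanh_atTop.sqrt
      exact ww_tanh_atTop.mul this
    have h := ((((ww_tanh_atTop.sub ww_ys_lim).pow 2).add
      (((ww_ysq_s_lim.const_mul 4).mul (ww_tanh_atTop.pow 2)))).div hden (by norm_num))
    norm_num at h
    exact h
  apply (tendsto_congr' _).mpr hEt
  filter_upwards [eventually_gt_atTop (0:ℝ)] with y hy
  have ht : 0 < Real.tanh y := ww_tanh_pos hy
  set t := Real.tanh y with hT
  set sy := Real.sqrt y with hSY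
  set st := Real.sqrt t with hST
  have hsy : 0 < sy := Real.sqrt_pos.mpr hy
  have hst : 0 < st := Real.sqrt_pos.mpr ht
  have hy2 : y = sy ^ 2 := (Real.sq_sqrt hy.le).symm
  have ht2 : t = st ^ 2 := (Real.sq_sqrt ht.le).symm
  have hsq : Real.sqrt (y * t) = sy * st := Real.sqrt_mul hy.le t
  rw [psiW_def, ← hT, hsq, ww_rpow_neg_threehalf hy, ← hSY, hy2, ht2]
  field_simp
  ring

/-- Properties of the water-wave phase `g(y) = √(y tanh y)`: monotonicity, concavity
and asymptotics of `g'` and `g''` at `0⁺` and `+∞`. -/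
theorem stmt14 (g : ℝ → ℝ) (hg : ∀ y : ℝ, g y = Real.sqrt (y * Real.tanh y)) :
    (∀ y : ℝ, 0 < y → 0 < deriv g y) ∧
    (∀ y : ℝ, 0 < y → iteratedDeriv 2 g y < 0) ∧
    Tendsto (fun y : ℝ => (deriv g y - 1) / (-(y ^ 2) / 2)) (𝓝[>] 0) (𝓝 1) ∧
    Tendsto (fun y : ℝ => deriv g y / ((1 / 2) * y ^ (-(1:ℝ) / 2))) atTop (𝓝 1) ∧
    Tendsto (fun y : ℝ => iteratedDeriv 2 g y / (-y)) (𝓝[>] 0) (𝓝 1) ∧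
    Tendsto (fun y : ℝ => iteratedDeriv 2 g y / (-(1 / 4) * y ^ (-(3:ℝ) / 2))) atTop (𝓝 1) := by
  have hgeq : g = fun x => Real.sqrt (x * Real.tanh x) := funext hg
  subst hgeq
  refine ⟨fun y hy => ?_, fun y hy => ?_, ?_, ?_, ?_, ?_⟩
  · rw [ww_deriv_g_eq hy]; exact ww_phi_pos hy
  · rw [ww_deriv2_eq hy]; exact ww_psi_neg hy
  · apply (tendsto_congr' ?_).mpr ww_phi_lim_zero
    filter_upwards [self_mem_nhdsWithin] with y hy
    rw [ww_deriv_g_eq hy]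
  · apply (tendsto_congr' ?_).mpr ww_phi_lim_top
    filter_upwards [eventually_gt_atTop (0:ℝ)] with y hy
    rw [ww_deriv_g_eq hy]
  · apply (tendsto_congr' ?_).mpr ww_psi_lim_zero
    filter_upwards [self_mem_nhdsWithin] with y hy
    rw [ww_deriv2_eq hy]
  · apply (tendsto_congr' ?_).mpr ww_psi_lim_top
    filter_upwards [eventually_gt_atTop (0:ℝ)] with y hy
    rw [ww_deriv2_eq hy]
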